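/- For any countable ordinal α, the one-point compactification of the disjoint union of countably infinitely many copies of the ordinal interval [0, ω^α] is homeomorphic to [0, ω^{α+1}]. -/

import Mathlib

open Ordinal Set Filter Topology OnePoint

/-- For a countable ordinal `α`, the one-point compactification of the disjoint union
of countably infinitely many copies of `[0, ω^α]` is homeomorphic to `[0, ω^{α+1}]`. -/
theorem stmt4 (α : Ordinal.{0}) (hα : α.card ≤ Cardinal.aleph0) :
    Nonempty (OnePoint (Σ _ : ℕ, (Set.Iic (omega0 ^ α))) ≃ₜ (Set.Iic (omega0 ^ (α + 1)))) := by
  clear hα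
  set W : Ordinal := omega0 ^ α with hWdef
  set V : Ordinal := W + 1 with hVdef
  set T : Ordinal := omega0 ^ (α + 1) with hTdef
  have hW0 : W ≠ 0 := opow_ne_zero α omega0_ne_zero
  have hW1 : 1 ≤ W := Ordinal.one_le_iff_ne_zero.2 hW0
  have h2 : (2 : Ordinal) = ((2 : ℕ) : Ordinal) := by norm_cast
  have h2ω : (2 : Ordinal) * omega0 = omega0 := by
    rw [h2]
    exact mul_omega0 (by exact_mod_cast Nat.zero_lt_two) (nat_lt_omega0 2)
  have hmul2 : W * 2 = W + W := by
    rw [show (2 : Ordinal) = 1 + 1 by norm_num, mul_add, mul_one]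
  have hV2 : V ≤ W * 2 := by rw [hmul2, hVdef]; exact add_le_add_right hW1 W
  have hVωW : V * omega0 = W * omega0 := by
    apply le_antisymm
    · calc V * omega0 ≤ W * 2 * omega0 := mul_le_mul_left hV2 _
        _ = W * (2 * omega0) := mul_assoc _ _ _
        _ = W * omega0 := by rw [h2ω]
    · exact mul_le_mul_left (le_self_add (a := W) (b := 1)) _
  have hT : T = V * omega0 := by
    rw [hTdef, opow_add, opow_one, ← hWdef, hVωW]
  have hT0 : T ≠ 0 := opow_ne_zero _ omega0_ne_zero
  -- bound for the building map
  have hstep : ∀ n : ℕ, V * (n : Ordinal) + V = V * ((n : Ordinal) + 1) := fun n => by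
    rw [mul_add, mul_one]
  have hle : ∀ n : ℕ, V * ((n : Ordinal) + 1) ≤ V * omega0 := fun n => by
    refine mul_le_mul_right ?_ V
    exact_mod_cast (nat_lt_omega0 (n + 1)).le
  have hWV : W < V := by
    rw [hVdef, Ordinal.add_one_eq_succ]; exact Order.lt_succ W
  have gbound : ∀ p : (Σ _ : ℕ, Set.Iic W), V * (p.1 : Ordinal) + (p.2 : Ordinal) < T := by
    rintro ⟨n, x, hx⟩
    rw [hT]
    calc V * (n : Ordinal) + x < V * (n : Ordinal) + V :=
          add_lt_add_right (lt_of_le_of_lt hx hWV) _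
      _ = V * ((n : Ordinal) + 1) := hstep n
      _ ≤ V * omega0 := hle n
  haveI : CompactSpace (Set.Iic W) := isCompact_iff_compactSpace.mp (by
    have h : Set.Iic W = Set.Icc 0 W := by ext z; simp [zero_le]
    rw [h]; exact isCompact_Icc)
  -- the map
  set f : OnePoint (Σ _ : ℕ, Set.Iic W) → Set.Iic T :=
    fun z => z.elim ⟨T, Set.self_mem_Iic⟩ (fun p => ⟨V * (p.1 : Ordinal) + (p.2 : Ordinal), (gbound p).le⟩)
    with hfdef
  have hinj : Function.Injective f := by
    intro z w h
    induction z using OnePoint.rec with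
    | infty =>
      induction w using OnePoint.rec with
      | infty => rfl
      | coe q =>
        exfalso
        have := congrArg Subtype.val h
        exact absurd this.symm (ne_of_lt (gbound q))
    | coe p =>
      induction w using OnePoint.rec with
      | infty =>
        exfalso
        have := congrArg Subtype.val h
        exact absurd this (ne_of_lt (gbound p))
      | coe q =>
        obtain ⟨n, x, hx⟩ := p
        obtain ⟨m, y, hy⟩ := q
        have hval : V * (n : Ordinal) + x = V * (m : Ordinal) + y := congrArg Subtype.val h
        have key : ∀ a b : ℕ, a < b → ∀ u v : Ordinal, u ≤ W → v ≤ W →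
            V * (a : Ordinal) + u ≠ V * (b : Ordinal) + v := by
          intro a b hab u v hu hv
          apply ne_of_lt
          calc V * (a : Ordinal) + u < V * (a : Ordinal) + V :=
                add_lt_add_right (lt_of_le_of_lt hu hWV) _
            _ = V * ((a : Ordinal) + 1) := hstep a
            _ ≤ V * (b : Ordinal) := by
                refine mul_le_mul_right ?_ V
                exact_mod_cast Nat.succ_le_of_lt hab
            _ ≤ V * (b : Ordinal) + v := le_self_add
        rcases lt_trichotomy n m with hnm | hnm | hnm
        · exact absurd hval (key n m hnm x y hx hy)
        · subst hnm
          have : x = y := add_left_cancel_iff.1 hval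
          subst this
          rfl
        · exact absurd hval.symm (key m n hnm y x hy hx)
  have hsurj : Function.Surjective f := by
    rintro ⟨b, hb⟩
    rcases eq_or_lt_of_le (Set.mem_Iic.1 hb) with heq | hlt
    · exact ⟨∞, Subtype.ext heq.symm⟩
    · have hbV : b < V * omega0 := hT ▸ hlt
      obtain ⟨c, hc, hbc⟩ := (lt_mul_iff_of_isSuccLimit isSuccLimit_omega0).1 hbV
      obtain ⟨k, rfl⟩ := lt_omega0.1 hc
      have hex : ∃ n : ℕ, b < V * ((n : Ordinal) + 1) :=
        ⟨k, hbc.trans_le (mul_le_mul_right (le_self_add) V)⟩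
      obtain ⟨n, hn, hmin⟩ : ∃ n : ℕ, b < V * ((n : Ordinal) + 1) ∧
          ∀ m : ℕ, m < n → ¬ b < V * ((m : Ordinal) + 1) :=
        ⟨Nat.find hex, Nat.find_spec hex, fun m hm => Nat.find_min hex hm⟩
      have hlow : V * (n : Ordinal) ≤ b := by
        cases n with
        | zero => simp
        | succ m =>
          have hmin' := hmin m (Nat.lt_succ_self m)
          push_neg at hmin'
          calc V * ((m + 1 : ℕ) : Ordinal) = V * ((m : Ordinal) + 1) := by push_cast; ring_nf
            _ ≤ b := hmin'
      set x := b - V * (n : Ordinal) with hxdef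
      have hxb : V * (n : Ordinal) + x = b := Ordinal.add_sub_cancel_of_le hlow
      have hxW : x ≤ W := by
        have h1 : V * (n : Ordinal) + x < V * (n : Ordinal) + V := by
          rw [hxb, hstep]; exact hn
        have h2 : x < V := (add_lt_add_iff_left _).1 h1
        rw [hVdef, Ordinal.add_one_eq_succ] at h2
        exact Order.lt_succ_iff.1 h2
      exact ⟨(⟨n, ⟨x, hxW⟩⟩ : Σ _ : ℕ, Set.Iic W), Subtype.ext hxb⟩
  set e : OnePoint (Σ _ : ℕ, Set.Iic W) ≃ Set.Iic T := Equiv.ofBijective f ⟨hinj, hsurj⟩ with hedef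
  have hcont : Continuous f := by
    rw [OnePoint.continuous_iff]
    constructor
    · -- tendsto at infinity
      have hfi : f ∞ = ⟨T, Set.self_mem_Iic⟩ := rfl
      rw [hfi]
      rw [tendsto_subtype_rng]
      have hval : (fun p : (Σ _ : ℕ, Set.Iic W) => ((f p : Set.Iic T) : Ordinal))
          = fun p => V * (p.1 : Ordinal) + (p.2 : Ordinal) := rfl
      rw [hval]
      rw [(hasBasis_coclosedCompact.tendsto_iff (SuccOrder.hasBasis_nhds_Ioc_of_exists_lt ⟨0, pos_iff_ne_zero.2 hT0⟩))]
      intro c hc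
      have hcV : c < V * omega0 := hT ▸ hc
      obtain ⟨d, hd, hcd⟩ := (lt_mul_iff_of_isSuccLimit isSuccLimit_omega0).1 hcV
      obtain ⟨N, rfl⟩ := lt_omega0.1 hd
      refine ⟨{p : (Σ _ : ℕ, Set.Iic W) | p.1 < N}, ⟨?_, ?_⟩, ?_⟩
      · rw [isClosed_sigma_iff]
        intro n
        by_cases hn : n < N
        · have : Sigma.mk n ⁻¹' {p : (Σ _ : ℕ, Set.Iic W) | p.1 < N} = Set.univ := by
            ext z; simp [hn]
          rw [this]; exact isClosed_univ
        · have : Sigma.mk n ⁻¹' {p : (Σ _ : ℕ, Set.Iic W) | p.1 < N} = ∅ := by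
            ext z; simp [hn]
          rw [this]; exact isClosed_empty
      · have : {p : (Σ _ : ℕ, Set.Iic W) | p.1 < N}
            = ⋃ n ∈ Finset.range N, Set.range (Sigma.mk n) := by
          ext ⟨n, z⟩
          simp only [Set.mem_setOf_eq, Set.mem_iUnion, Finset.mem_range, Set.mem_range]
          constructor
          · intro h; exact ⟨n, h, z, rfl⟩
          · rintro ⟨m, hm, w, hw⟩
            obtain ⟨rfl, -⟩ := Sigma.mk.inj_iff.1 hw
            exact hm
        rw [this]
        exact (Finset.range N).finite_toSet.isCompact_biUnion
          (fun n _ => isCompact_range continuous_sigmaMk)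
      · rintro ⟨n, z⟩ hp
        simp only [Set.mem_compl_iff, Set.mem_setOf_eq, not_lt] at hp
        constructor
        · calc c < V * (N : Ordinal) := hcd
            _ ≤ V * (n : Ordinal) := mul_le_mul_right (by exact_mod_cast hp) V
            _ ≤ V * (n : Ordinal) + (z : Ordinal) := le_self_add
        · exact (gbound ⟨n, z⟩).le
    · -- continuity on the sigma type
      apply continuous_sigma
      intro n
      have : (fun x : Set.Iic W => f (⟨n, x⟩ : Σ _ : ℕ, Set.Iic W))
          = fun x : Set.Iic W => (⟨V * (n : Ordinal) + (x : Ordinal),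
              (gbound ⟨n, x⟩).le⟩ : Set.Iic T) := rfl
      rw [this]
      apply Continuous.subtype_mk
      exact ((isNormal_add_right (V * (n : Ordinal))).continuous).comp continuous_subtype_val
  exact ⟨Continuous.homeoOfEquivCompactToT2 (f := e) hcont⟩
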